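/- Let P ⊆ ℝ^N be a polyhedron with positive N-dimensional Lebesgue measure and let f : ℝ^N → ℝ be an affine function such that Q := P ∩ {x ∈ ℝ^N : f(x) = 0} is nonempty. If Q is not a face of P, then the (N−1)-dimensional Hausdorff measure of Q is positive. -/

import Mathlib

open MeasureTheory Metric Set
open scoped ENNReal NNReal

/-- Let `P ⊆ ℝ^N` be a polyhedron (an intersection of finitely many closed
half-spaces) with positive `N`-dimensional Lebesgue measure, and let `f` be an affine
function such that `Q = P ∩ {f = 0}` is nonempty. If `Q` is not a face of `P`, then the
`(N−1)`-dimensional Hausdorff measure of `Q` is positive. -/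
theorem stmt9 (N : ℕ) (P : Set (EuclideanSpace ℝ (Fin N)))
    (hpoly : ∃ (m : ℕ) (g : Fin m → (EuclideanSpace ℝ (Fin N) →ᵃ[ℝ] ℝ)),
      P = ⋂ i, {x | g i x ≤ 0})
    (hvol : 0 < volume P)
    (f : EuclideanSpace ℝ (Fin N) →ᵃ[ℝ] ℝ)
    (hQne : (P ∩ {x | f x = 0}).Nonempty)
    (hnotface : ¬ ∃ g : EuclideanSpace ℝ (Fin N) →ᵃ[ℝ] ℝ,
      (∀ x ∈ P, g x ≤ 0) ∧ P ∩ {x | f x = 0} = P ∩ {x | g x = 0}) :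
    0 < MeasureTheory.Measure.hausdorffMeasure ((N : ℝ) - 1) (P ∩ {x | f x = 0}) := by
  classical
  set E := EuclideanSpace ℝ (Fin N)
  -- P is convex
  obtain ⟨m₀, g₀, rfl⟩ := hpoly
  set P : Set E := ⋂ i, {x | g₀ i x ≤ 0} with hP
  have hconv : Convex ℝ P := by
    refine convex_iInter fun i => ?_
    have : {x : E | g₀ i x ≤ 0} = (g₀ i) ⁻¹' Set.Iic 0 := rfl
    rw [this]
    exact (convex_Iic (0:ℝ)).affine_preimage _
  -- f takes both signs on P
  have ha : ∃ a ∈ P, 0 < f a := by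
    by_contra h
    push_neg at h
    exact hnotface ⟨f, fun x hx => not_lt.1 fun hlt => absurd (h x hx) (not_le.2 hlt), rfl⟩
  have hb : ∃ b ∈ P, f b < 0 := by
    by_contra h
    push_neg at h
    refine hnotface ⟨-f, fun x hx => by simpa using h x hx, ?_⟩
    ext x
    simp [neg_eq_zero]
  obtain ⟨a, haP, hfa⟩ := ha
  obtain ⟨b, hbP, hfb⟩ := hb
  -- interior of P is nonempty
  have hint : (interior P).Nonempty := by
    by_contra h
    rw [Set.not_nonempty_iff_eq_empty] at h
    have hspan : affineSpan ℝ P ≠ ⊤ := by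
      intro htop
      rw [← hconv.interior_nonempty_iff_affineSpan_eq_top] at htop
      exact htop.ne_empty h
    have : volume P = 0 :=
      measure_mono_null (subset_affineSpan ℝ P) (Measure.addHaar_affineSubspace _ _ hspan)
    exact absurd this hvol.ne'
  obtain ⟨x₀, hx₀⟩ := hint
  -- find an interior point where f vanishes
  have hy : ∃ y ∈ interior P, f y = 0 := by
    rcases lt_trichotomy (f x₀) 0 with h0 | h0 | h0
    · -- combine x₀ with a
      set t : ℝ := f x₀ / (f x₀ - f a) with ht
      have hden : f x₀ - f a < 0 := by linarith
      have ht0 : 0 < t := div_pos_of_neg_of_neg h0 hden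
      have ht1 : t < 1 := by
        rw [div_lt_one_of_neg hden]; linarith
      refine ⟨(1 - t) • x₀ + t • a, hconv.combo_interior_self_mem_interior hx₀ haP
        (by linarith) ht0.le (by ring), ?_⟩
      have hden' : f x₀ - f a ≠ 0 := ne_of_lt hden
      have h2 : f ((1 - t) • x₀ + t • a) = (1 - t) * f x₀ + t * f a := by
        rw [← AffineMap.lineMap_apply_module, f.apply_lineMap,
          AffineMap.lineMap_apply_module]
        simp [smul_eq_mul]
      rw [h2, ht]
      field_simp
      ring
    · exact ⟨x₀, hx₀, h0⟩
    · set t : ℝ := f x₀ / (f x₀ - f b) with ht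
      have hden : 0 < f x₀ - f b := by linarith
      have ht0 : 0 < t := div_pos h0 hden
      have ht1 : t < 1 := by
        rw [div_lt_one hden]; linarith
      refine ⟨(1 - t) • x₀ + t • b, hconv.combo_interior_self_mem_interior hx₀ hbP
        (by linarith) ht0.le (by ring), ?_⟩
      have hden' : f x₀ - f b ≠ 0 := ne_of_gt hden
      have h2 : f ((1 - t) • x₀ + t • b) = (1 - t) * f x₀ + t * f b := by
        rw [← AffineMap.lineMap_apply_module, f.apply_lineMap,
          AffineMap.lineMap_apply_module]
        simp [smul_eq_mul]
      rw [h2, ht]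
      field_simp
      ring
  obtain ⟨y, hyint, hfy⟩ := hy
  obtain ⟨ε, hε, hball⟩ := Metric.isOpen_iff.1 isOpen_interior y hyint
  have hballP : Metric.ball y ε ⊆ P := hball.trans interior_subset
  -- the linear part of f is nonzero
  have hflin : f.linear ≠ 0 := by
    intro h
    have := f.linearMap_vsub a b
    rw [h] at this
    simp only [LinearMap.zero_apply, vsub_eq_sub] at this
    have : f a = f b := by linarith [sub_eq_zero.1 this.symm]
    linarith
  have hN : 1 ≤ N := by
    rcases Nat.eq_zero_or_pos N with h | h
    · exfalso
      apply hflin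
      ext v
      have : v = 0 := by
        subst h
        exact Subsingleton.elim _ _
      simp [this]
    · exact h
  -- the kernel of f.linear
  set W : Submodule ℝ E := LinearMap.ker f.linear with hW
  have hrange : LinearMap.range f.linear = ⊤ := by
    obtain ⟨v, hv⟩ : ∃ v, f.linear v ≠ 0 := by
      by_contra h
      push_neg at h
      exact hflin (LinearMap.ext fun v => by simp [h v])
    rw [Submodule.eq_top_iff']
    intro c
    exact ⟨(c / f.linear v) • v, by rw [LinearMap.map_smul, smul_eq_mul]; field_simp⟩
  have hrankW : Module.finrank ℝ W = N - 1 := by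
    have h1 := LinearMap.finrank_range_add_finrank_ker f.linear
    rw [hrange, finrank_top, Module.finrank_self] at h1
    have h2 : Module.finrank ℝ E = N := finrank_euclideanSpace_fin
    rw [h2] at h1
    have h3 : 1 + Module.finrank ℝ W = N := h1
    omega
  set M : ℕ := N - 1 with hM
  have hcast : (N : ℝ) - 1 = (M : ℝ) := by
    rw [hM]
    push_cast [hN]
    ring
  rw [hcast]
  -- isometric embedding of ℝ^M into the hyperplane
  have e : EuclideanSpace ℝ (Fin M) ≃ₗᵢ[ℝ] W :=
    (LinearIsometryEquiv.refl ℝ _).trans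
      ((stdOrthonormalBasis ℝ W).reindex (finCongr hrankW)).repr.symm
  set φ : EuclideanSpace ℝ (Fin M) → E := fun z => ((e z : W) : E) + y with hφ
  have hiso : Isometry φ := by
    apply Isometry.of_dist_eq
    intro z z'
    have h1 : φ z - φ z' = ((e z - e z' : W) : E) := by
      simp [hφ]
    rw [dist_eq_norm, h1]
    rw [Submodule.norm_coe (e z - e z'), ← map_sub e, e.norm_map, dist_eq_norm]
  have himg : φ '' (Metric.ball 0 ε) ⊆ P ∩ {x | f x = 0} := by
    rintro _ ⟨z, hz, rfl⟩
    constructor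
    · apply hballP
      rw [Metric.mem_ball, dist_eq_norm]
      have : φ z - y = ((e z : W) : E) := by simp [hφ]
      rw [this, Submodule.norm_coe, e.norm_map]
      simpa [dist_eq_norm] using hz
    · show f (φ z) = 0
      have : φ z = ((e z : W) : E) +ᵥ y := rfl
      rw [this, f.map_vadd]
      have hker : f.linear ((e z : W) : E) = 0 := (e z).2
      rw [hker, hfy]
      simp
  calc (0 : ℝ≥0∞) < μH[(M:ℝ)] (Metric.ball (0 : EuclideanSpace ℝ (Fin M)) ε) := by
        -- push to the sup-norm pi space
        set c : EuclideanSpace ℝ (Fin M) → (Fin M → ℝ) := ⇑(WithLp.equiv 2 (Fin M → ℝ)) with hc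
        have hlip : LipschitzWith 1 c := PiLp.lipschitzWith_ofLp 2 _
        have hle := hlip.hausdorffMeasure_image_le (by positivity : (0:ℝ) ≤ (M:ℝ))
          (Metric.ball (0 : EuclideanSpace ℝ (Fin M)) ε)
        have hopen : IsOpen (c '' Metric.ball 0 ε) := by
          have : c '' Metric.ball 0 ε = ⇑(WithLp.equiv 2 (Fin M → ℝ)).symm ⁻¹' Metric.ball 0 ε := by
            rw [Equiv.image_eq_preimage_symm]
          rw [this]
          exact Metric.isOpen_ball.preimage (PiLp.continuous_toLp 2 _)
        have hne : (c '' Metric.ball 0 ε).Nonempty :=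
          ⟨c 0, Set.mem_image_of_mem c (Metric.mem_ball_self hε)⟩
        have hpos : 0 < μH[(M:ℝ)] (c '' Metric.ball 0 ε) := by
          have : (μH[(M:ℝ)] : Measure (Fin M → ℝ)) = volume := by
            simpa using (hausdorffMeasure_pi_real (ι := Fin M))
          rw [this]
          exact hopen.measure_pos volume hne
        refine hpos.trans_le (hle.trans_eq ?_)
        simp
    _ = μH[(M:ℝ)] (φ '' Metric.ball 0 ε) :=
        (hiso.hausdorffMeasure_image (Or.inl (by positivity)) _).symm
    _ ≤ μH[(M:ℝ)] (P ∩ {x | f x = 0}) := measure_mono himg
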